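/- arXiv:2411.13000 — 2 statements merged into one kernel-verified Lean document; each statement's English description precedes it below -/
import Mathlib

section
/- (Lemma III.1, Contraction) Let d be a positive natural number, p ∈ (0,1), and λ = min(p, 1−p). Let x ∈ ℝ^d be a fixed vector and let φ = (φ_1,…,φ_d) be a random vector whose entries are i.i.d. with P(φ_j = 1) = p and P(φ_j = −1) = 1−p. Define g ∈ ℝ^d entrywise by g_j = max(x_j φ_j, 0). Then E‖x − φ ⊙ g‖² ≤ (1−λ)‖x‖², where the expectation is over the randomness of φ. -/
open MeasureTheory ProbabilityTheory

/-- Contraction lemma for binary dithering (Lemma III.1): if the entries of the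
dither vector `φ` are i.i.d. with `P(φ_j = 1) = p` and `P(φ_j = -1) = 1 - p`,
`p ∈ (0,1)`, and `g_j = max (x_j * φ_j) 0`, then
`E ‖x - φ ⊙ g‖² ≤ (1 - min p (1-p)) ‖x‖²` (squared Euclidean norms written as
sums of squares of coordinates). -/
theorem stmt_0 {Ω : Type*} [MeasurableSpace Ω] (μ : Measure Ω) [IsProbabilityMeasure μ]
    (d : ℕ) (hd : 0 < d) (p : ℝ) (hp : p ∈ Set.Ioo (0 : ℝ) 1)
    (x : Fin d → ℝ) (φ : Fin d → Ω → ℝ)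
    (hmeas : ∀ j, Measurable (φ j))
    (hval : ∀ j ω, φ j ω = 1 ∨ φ j ω = -1)
    (hone : ∀ j, μ {ω | φ j ω = 1} = ENNReal.ofReal p)
    (hmone : ∀ j, μ {ω | φ j ω = -1} = ENNReal.ofReal (1 - p))
    (hindep : iIndepFun φ μ) :
    ∫ ω, ∑ j, (x j - φ j ω * max (x j * φ j ω) 0) ^ 2 ∂μ
      ≤ (1 - min p (1 - p)) * ∑ j, (x j) ^ 2 := by
  obtain ⟨hp0, hp1⟩ := hp
  set A : Fin d → Set Ω := fun j => {ω | φ j ω = 1} with hA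
  have hAmeas : ∀ j, MeasurableSet (A j) := fun j =>
    (hmeas j) (measurableSet_singleton (1 : ℝ))
  have hAc : ∀ j, (A j)ᶜ = {ω | φ j ω = -1} := by
    intro j
    ext ω
    rcases hval j ω with h | h <;> simp [A, h] <;> norm_num
  -- pointwise description of each summand
  have key : ∀ j : Fin d,
      (fun ω => (x j - φ j ω * max (x j * φ j ω) 0) ^ 2)
      = (A j).indicator (fun _ => (x j - max (x j) 0) ^ 2)
        + (A j)ᶜ.indicator (fun _ => (x j + max (-(x j)) 0) ^ 2) := by
    intro j
    funext ω
    rcases hval j ω with h | h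
    · have hω : ω ∈ A j := h
      simp [Set.indicator, hω, h]
    · have hω : ω ∉ A j := by simp [A, h]; norm_num
      simp [Set.indicator, hω, h]
  have hint : ∀ j : Fin d,
      Integrable (fun ω => (x j - φ j ω * max (x j * φ j ω) 0) ^ 2) μ := by
    intro j
    rw [key j]
    exact ((integrable_const _).indicator (hAmeas j)).add
      ((integrable_const _).indicator (hAmeas j).compl)
  rw [integral_finset_sum _ (fun j _ => hint j)]
  have hbound : ∀ j : Fin d,
      ∫ ω, (x j - φ j ω * max (x j * φ j ω) 0) ^ 2 ∂μ
        ≤ (1 - min p (1 - p)) * (x j) ^ 2 := by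
    intro j
    rw [key j, integral_add' ((integrable_const _).indicator (hAmeas j))
      ((integrable_const _).indicator (hAmeas j).compl),
      integral_indicator_const _ (hAmeas j),
      integral_indicator_const _ (hAmeas j).compl]
    have hμA : (μ (A j)).toReal = p := by
      rw [hone j, ENNReal.toReal_ofReal hp0.le]
    have hμAc : (μ (A j)ᶜ).toReal = 1 - p := by
      rw [hAc j, hmone j, ENNReal.toReal_ofReal (by linarith)]
    rw [measureReal_def, measureReal_def, hμA, hμAc]
    simp only [smul_eq_mul]
    rcases le_or_gt (x j) 0 with h | h
    · have h1 : max (x j) 0 = 0 := max_eq_right h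
      have h2 : max (-(x j)) 0 = -(x j) := max_eq_left (by linarith)
      rw [h1, h2]
      have hmin : min p (1 - p) ≤ 1 - p := min_le_right _ _
      nlinarith [sq_nonneg (x j)]
    · have h1 : max (x j) 0 = x j := max_eq_left h.le
      have h2 : max (-(x j)) 0 = 0 := max_eq_right (by linarith)
      rw [h1, h2]
      have hmin : min p (1 - p) ≤ p := min_le_left _ _
      nlinarith [sq_nonneg (x j)]
  calc ∑ j, ∫ ω, (x j - φ j ω * max (x j * φ j ω) 0) ^ 2 ∂μ
      ≤ ∑ j, (1 - min p (1 - p)) * (x j) ^ 2 :=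
        Finset.sum_le_sum fun j _ => hbound j
    _ = (1 - min p (1 - p)) * ∑ j, (x j) ^ 2 := by rw [Finset.mul_sum]
end

section
/- (Memory bound) Let (Ω, ℱ, P) be a probability space, d a positive natural number, λ ∈ (0,1], and D ≥ 0. Let (M_t)_{t∈ℕ} and (Δ_t)_{t∈ℕ} be sequences of square-integrable ℝ^d-valued random vectors such that M_0 = 0 almost surely, E‖Δ_t‖² ≤ D² for all t, and E‖M_{t+1}‖² ≤ (1−λ)·E‖M_t + Δ_t‖² for all t. Then for every t ∈ ℕ, E‖M_t‖² ≤ 4(1−λ²)D²/λ². -/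
open MeasureTheory

/-- Memory bound: if `M 0 = 0` a.s., `E‖Δ t‖² ≤ D²` for all `t`, and the
contraction `E‖M (t+1)‖² ≤ (1-λ) E‖M t + Δ t‖²` holds for all `t`, then
`E‖M t‖² ≤ 4 (1-λ²) D² / λ²` for every `t`. -/
theorem stmt_6 {Ω : Type*} [MeasurableSpace Ω] (μ : Measure Ω) [IsProbabilityMeasure μ]
    (d : ℕ) (hd : 0 < d) (lam D : ℝ) (hlam : lam ∈ Set.Ioc (0 : ℝ) 1) (hD : 0 ≤ D)
    (M Δ : ℕ → Ω → EuclideanSpace ℝ (Fin d))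
    (hmemM : ∀ t, MemLp (M t) 2 μ) (hmemΔ : ∀ t, MemLp (Δ t) 2 μ)
    (hM0 : M 0 =ᵐ[μ] 0)
    (hΔ : ∀ t, ∫ ω, ‖Δ t ω‖ ^ 2 ∂μ ≤ D ^ 2)
    (hrec : ∀ t, ∫ ω, ‖M (t + 1) ω‖ ^ 2 ∂μ
        ≤ (1 - lam) * ∫ ω, ‖M t ω + Δ t ω‖ ^ 2 ∂μ) :
    ∀ t, ∫ ω, ‖M t ω‖ ^ 2 ∂μ ≤ 4 * (1 - lam ^ 2) * D ^ 2 / lam ^ 2 := by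
  obtain ⟨hl0, hl1⟩ := hlam
  have hlne : lam ≠ 0 := ne_of_gt hl0
  have hintM : ∀ t, Integrable (fun ω => ‖M t ω‖ ^ 2) μ :=
    fun t => (hmemM t).norm.integrable_sq
  have hintΔ : ∀ t, Integrable (fun ω => ‖Δ t ω‖ ^ 2) μ :=
    fun t => (hmemΔ t).norm.integrable_sq
  have hintS : ∀ t, Integrable (fun ω => ‖M t ω + Δ t ω‖ ^ 2) μ :=
    fun t => ((hmemM t).add (hmemΔ t)).norm.integrable_sq
  have hnonnegM : ∀ t, 0 ≤ ∫ ω, ‖M t ω‖ ^ 2 ∂μ :=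
    fun t => integral_nonneg fun ω => by positivity
  have hnonnegΔ : ∀ t, 0 ≤ ∫ ω, ‖Δ t ω‖ ^ 2 ∂μ :=
    fun t => integral_nonneg fun ω => by positivity
  -- key integral bound
  have key : ∀ t, ∫ ω, ‖M t ω + Δ t ω‖ ^ 2 ∂μ
      ≤ (1 + lam / 2) * ∫ ω, ‖M t ω‖ ^ 2 ∂μ + (1 + 2 / lam) * ∫ ω, ‖Δ t ω‖ ^ 2 ∂μ := by
    intro t
    have hpt : ∀ ω, ‖M t ω + Δ t ω‖ ^ 2
        ≤ (1 + lam / 2) * ‖M t ω‖ ^ 2 + (1 + 2 / lam) * ‖Δ t ω‖ ^ 2 := by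
      intro ω
      set a := ‖M t ω‖
      set b := ‖Δ t ω‖
      have ha : 0 ≤ a := norm_nonneg _
      have hb : 0 ≤ b := norm_nonneg _
      have htri : ‖M t ω + Δ t ω‖ ≤ a + b := norm_add_le _ _
      have h1 : ‖M t ω + Δ t ω‖ ^ 2 ≤ (a + b) ^ 2 := by
        have := norm_nonneg (M t ω + Δ t ω)
        nlinarith
      have h2 : (a + b) ^ 2 ≤ (1 + lam / 2) * a ^ 2 + (1 + 2 / lam) * b ^ 2 := by
        have hc : 2 / lam * lam = 2 := div_mul_cancel₀ 2 hlne
        nlinarith [sq_nonneg (lam * a - 2 * b), sq_nonneg (a - b), mul_pos hl0 hl0]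
      linarith
    calc ∫ ω, ‖M t ω + Δ t ω‖ ^ 2 ∂μ
        ≤ ∫ ω, ((1 + lam / 2) * ‖M t ω‖ ^ 2 + (1 + 2 / lam) * ‖Δ t ω‖ ^ 2) ∂μ := by
          refine integral_mono (hintS t) ?_ hpt
          exact ((hintM t).const_mul _).add ((hintΔ t).const_mul _)
      _ = (1 + lam / 2) * ∫ ω, ‖M t ω‖ ^ 2 ∂μ + (1 + 2 / lam) * ∫ ω, ‖Δ t ω‖ ^ 2 ∂μ := by
          rw [integral_add ((hintM t).const_mul _) ((hintΔ t).const_mul _),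
            integral_const_mul, integral_const_mul]
  have hBnonneg : 0 ≤ 4 * (1 - lam ^ 2) * D ^ 2 / lam ^ 2 := by
    apply div_nonneg _ (by positivity)
    have : lam ^ 2 ≤ 1 := by nlinarith
    nlinarith
  intro t
  induction t with
  | zero =>
      have : ∫ ω, ‖M 0 ω‖ ^ 2 ∂μ = 0 := by
        have h0 : (fun ω => ‖M 0 ω‖ ^ 2) =ᵐ[μ] fun _ => (0 : ℝ) := by
          filter_upwards [hM0] with ω hω
          simp [hω]
        rw [integral_congr_ae h0, integral_zero]
      rw [this]; exact hBnonneg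
  | succ t ih =>
      have h1 := hrec t
      have h2 := key t
      have h3 := hΔ t
      have h4 : ∫ ω, ‖M (t + 1) ω‖ ^ 2 ∂μ
          ≤ (1 - lam) * ((1 + lam / 2) * (4 * (1 - lam ^ 2) * D ^ 2 / lam ^ 2)
              + (1 + 2 / lam) * D ^ 2) := by
        have hl1' : 0 ≤ 1 - lam := by linarith
        calc ∫ ω, ‖M (t + 1) ω‖ ^ 2 ∂μ
            ≤ (1 - lam) * ∫ ω, ‖M t ω + Δ t ω‖ ^ 2 ∂μ := h1
          _ ≤ (1 - lam) * ((1 + lam / 2) * (4 * (1 - lam ^ 2) * D ^ 2 / lam ^ 2)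
              + (1 + 2 / lam) * D ^ 2) := by
              apply mul_le_mul_of_nonneg_left _ hl1'
              calc ∫ ω, ‖M t ω + Δ t ω‖ ^ 2 ∂μ
                  ≤ (1 + lam / 2) * ∫ ω, ‖M t ω‖ ^ 2 ∂μ
                      + (1 + 2 / lam) * ∫ ω, ‖Δ t ω‖ ^ 2 ∂μ := h2
                _ ≤ (1 + lam / 2) * (4 * (1 - lam ^ 2) * D ^ 2 / lam ^ 2)
                      + (1 + 2 / lam) * D ^ 2 := by
                    have hc1 : (0:ℝ) ≤ 1 + lam / 2 := by linarith
                    have hc2 : (0:ℝ) ≤ 1 + 2 / lam := by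
                      have : (0:ℝ) < 2 / lam := by positivity
                      linarith
                    exact add_le_add (mul_le_mul_of_nonneg_left ih hc1)
                      (mul_le_mul_of_nonneg_left h3 hc2)
      refine h4.trans ?_
      have hl2 : (0:ℝ) < lam ^ 2 := by positivity
      rw [← mul_le_mul_iff_right₀ hl2]
      have e1 : lam ^ 2 * (4 * (1 - lam ^ 2) * D ^ 2 / lam ^ 2)
          = 4 * (1 - lam ^ 2) * D ^ 2 := by field_simp
      have e2 : lam ^ 2 * ((1 - lam) * ((1 + lam / 2) * (4 * (1 - lam ^ 2) * D ^ 2 / lam ^ 2)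
            + (1 + 2 / lam) * D ^ 2))
          = (1 - lam) * ((1 + lam / 2) * (4 * (1 - lam ^ 2) * D ^ 2)
            + (lam ^ 2 + 2 * lam) * D ^ 2) := by field_simp
      rw [e1, e2]
      nlinarith [mul_nonneg (mul_nonneg (mul_nonneg hl2.le (sub_nonneg.mpr hl1))
          (by linarith : (0:ℝ) ≤ 2 * lam + 3)) (sq_nonneg D)]
end
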